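/- Let β¹, β², β³ ∈ Λ²V be 2-forms. There exists α ∈ V with α∧e^i = β^i for i = 1,2,3 if and only if β^i∧e^j + β^j∧e^i = 0 in Λ³V for all i, j ∈ {1,2,3}; and in that case the solution is unique and given by α = (1/2)·Σ_{i,j,k} ε_{ijk}·((β^i∧e^j)/w)·e^k. -/

import Mathlib

open ExteriorAlgebra

noncomputable section

/-- 3-index Levi-Civita symbol on `Fin 3`, normalized so that `ε₁₂₃ = 1`. -/
def lc3 (i j k : Fin 3) : ℝ :=
  ((j.val : ℝ) - (i.val : ℝ)) * ((k.val : ℝ) - (i.val : ℝ)) * ((k.val : ℝ) - (j.val : ℝ)) / 2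

namespace Stmt6Aux

variable {V : Type*} [AddCommGroup V] [Module ℝ V]

lemma ι_swap (x y : V) : ι ℝ y * ι ℝ x = -(ι ℝ x * ι ℝ y) :=
  eq_neg_of_add_eq_zero_right (ι_add_mul_swap x y)

lemma w_ne_zero (b : Module.Basis (Fin 3) ℝ V) :
    ι ℝ (b 0) * ι ℝ (b 1) * ι ℝ (b 2) ≠ 0 := by
  intro h
  have hw : ιMulti ℝ 3 (fun i => b i) = ι ℝ (b 0) * ι ℝ (b 1) * ι ℝ (b 2) := by
    rw [ιMulti_apply]
    simp [List.ofFn_succ, mul_assoc]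
  let hf : ∀ i, V [⋀^Fin i]→ₗ[ℝ] ℝ := fun n =>
    match n with
    | 3 => b.det
    | _ => 0
  have h2 := congrArg (liftAlternating hf) (hw.trans h)
  rw [liftAlternating_apply_ιMulti, map_zero] at h2
  have hd : hf 3 (fun i => b i) = 1 := b.det_self
  rw [hd] at h2
  exact one_ne_zero h2

set_option maxHeartbeats 2000000 in
lemma triple (b : Module.Basis (Fin 3) ℝ V) (i j k : Fin 3) :
    ι ℝ (b i) * ι ℝ (b j) * ι ℝ (b k) =
      lc3 i j k • (ι ℝ (b 0) * ι ℝ (b 1) * ι ℝ (b 2)) := by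
  have s10 : ι ℝ (b 1) * ι ℝ (b 0) = -(ι ℝ (b 0) * ι ℝ (b 1)) := ι_swap _ _
  have s20 : ι ℝ (b 2) * ι ℝ (b 0) = -(ι ℝ (b 0) * ι ℝ (b 2)) := ι_swap _ _
  have s21 : ι ℝ (b 2) * ι ℝ (b 1) = -(ι ℝ (b 1) * ι ℝ (b 2)) := ι_swap _ _
  have s10' : ∀ x, ι ℝ (b 1) * (ι ℝ (b 0) * x) = -(ι ℝ (b 0) * (ι ℝ (b 1) * x)) := by
    intro x; rw [← mul_assoc, s10, ← mul_assoc, neg_mul]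
  have s20' : ∀ x, ι ℝ (b 2) * (ι ℝ (b 0) * x) = -(ι ℝ (b 0) * (ι ℝ (b 2) * x)) := by
    intro x; rw [← mul_assoc, s20, ← mul_assoc, neg_mul]
  have s21' : ∀ x, ι ℝ (b 2) * (ι ℝ (b 1) * x) = -(ι ℝ (b 1) * (ι ℝ (b 2) * x)) := by
    intro x; rw [← mul_assoc, s21, ← mul_assoc, neg_mul]
  have z : ∀ m : V, ι ℝ m * ι ℝ m = 0 := ι_sq_zero
  have z' : ∀ (m : V) x, ι ℝ m * (ι ℝ m * x) = 0 := by
    intro m x; rw [← mul_assoc, z, zero_mul]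
  have hmk : (⟨2, by omega⟩ : Fin 3) = 2 := rfl
  fin_cases i <;> fin_cases j <;> fin_cases k
  all_goals
    norm_num [mul_assoc, s10, s20, s21, s10', s20', s21', z, z', mul_neg, mul_zero,
      neg_neg, neg_zero, lc3, neg_smul, one_smul, zero_smul, hmk]

lemma w_smul_cancel (b : Module.Basis (Fin 3) ℝ V) {r : ℝ}
    (h : r • (ι ℝ (b 0) * ι ℝ (b 1) * ι ℝ (b 2)) = 0) : r = 0 := by
  rcases smul_eq_zero.mp h with h | h
  · exact h
  · exact absurd h (w_ne_zero b)

lemma pair (b : Module.Basis (Fin 3) ℝ V) (x y : V) : ι ℝ x * ι ℝ y =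
    (b.repr x 0 * b.repr y 1 - b.repr x 1 * b.repr y 0) • (ι ℝ (b 0) * ι ℝ (b 1)) +
    (b.repr x 0 * b.repr y 2 - b.repr x 2 * b.repr y 0) • (ι ℝ (b 0) * ι ℝ (b 2)) +
    (b.repr x 1 * b.repr y 2 - b.repr x 2 * b.repr y 1) • (ι ℝ (b 1) * ι ℝ (b 2)) := by
  have s10 : ι ℝ (b 1) * ι ℝ (b 0) = -(ι ℝ (b 0) * ι ℝ (b 1)) := ι_swap _ _
  have s20 : ι ℝ (b 2) * ι ℝ (b 0) = -(ι ℝ (b 0) * ι ℝ (b 2)) := ι_swap _ _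
  have s21 : ι ℝ (b 2) * ι ℝ (b 1) = -(ι ℝ (b 1) * ι ℝ (b 2)) := ι_swap _ _
  conv_lhs => rw [← b.sum_repr x, ← b.sum_repr y]
  rw [map_sum, map_sum, Finset.sum_mul]
  simp only [map_smul, Finset.mul_sum, smul_mul_assoc, mul_smul_comm, Fin.sum_univ_three,
    ι_sq_zero, smul_zero, s10, s20, s21, smul_neg, smul_smul, mul_add, add_mul]
  module

/-- every element of `Λ²V` is a combination of the three basis 2-forms. -/
lemma mem2_repr (b : Module.Basis (Fin 3) ℝ V) {γ : ExteriorAlgebra ℝ V}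
    (hγ : γ ∈ (LinearMap.range (ι ℝ : V →ₗ[ℝ] ExteriorAlgebra ℝ V) ^ 2 :
      Submodule ℝ (ExteriorAlgebra ℝ V))) :
    ∃ B : Fin 3 → ℝ, γ = B 0 • (ι ℝ (b 0) * ι ℝ (b 1)) + B 1 • (ι ℝ (b 0) * ι ℝ (b 2)) +
      B 2 • (ι ℝ (b 1) * ι ℝ (b 2)) := by
  rw [pow_two] at hγ
  refine Submodule.mul_induction_on hγ ?_ ?_
  · rintro _ ⟨x, rfl⟩ _ ⟨y, rfl⟩
    exact ⟨![b.repr x 0 * b.repr y 1 - b.repr x 1 * b.repr y 0,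
      b.repr x 0 * b.repr y 2 - b.repr x 2 * b.repr y 0,
      b.repr x 1 * b.repr y 2 - b.repr x 2 * b.repr y 1], pair b x y⟩
  · rintro u v ⟨Bu, rfl⟩ ⟨Bv, rfl⟩
    exact ⟨Bu + Bv, by simp only [Pi.add_apply, add_smul]; module⟩

/-- a 2-form all of whose wedges with the basis 1-forms vanish is zero. -/
lemma key (b : Module.Basis (Fin 3) ℝ V) {γ : ExteriorAlgebra ℝ V}
    (hγ : γ ∈ (LinearMap.range (ι ℝ : V →ₗ[ℝ] ExteriorAlgebra ℝ V) ^ 2 :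
      Submodule ℝ (ExteriorAlgebra ℝ V)))
    (h : ∀ j : Fin 3, γ * ι ℝ (b j) = 0) : γ = 0 := by
  obtain ⟨B, rfl⟩ := mem2_repr b hγ
  have t010 : ι ℝ (b 0) * ι ℝ (b 1) * ι ℝ (b 0) = 0 := by
    have h := triple b 0 1 0; norm_num [lc3] at h; exact h
  have t020 : ι ℝ (b 0) * ι ℝ (b 2) * ι ℝ (b 0) = 0 := by
    have h := triple b 0 2 0; norm_num [lc3] at h; exact h
  have t120 : ι ℝ (b 1) * ι ℝ (b 2) * ι ℝ (b 0) =
      ι ℝ (b 0) * ι ℝ (b 1) * ι ℝ (b 2) := by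
    have h := triple b 1 2 0; norm_num [lc3] at h; exact h
  have t011 : ι ℝ (b 0) * ι ℝ (b 1) * ι ℝ (b 1) = 0 := by
    have h := triple b 0 1 1; norm_num [lc3] at h; exact h
  have t021 : ι ℝ (b 0) * ι ℝ (b 2) * ι ℝ (b 1) =
      -(ι ℝ (b 0) * ι ℝ (b 1) * ι ℝ (b 2)) := by
    have h := triple b 0 2 1; norm_num [lc3, neg_smul] at h; exact h
  have t121 : ι ℝ (b 1) * ι ℝ (b 2) * ι ℝ (b 1) = 0 := by
    have h := triple b 1 2 1; norm_num [lc3] at h; exact h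
  have t022 : ι ℝ (b 0) * ι ℝ (b 2) * ι ℝ (b 2) = 0 := by
    have h := triple b 0 2 2; norm_num [lc3] at h; exact h
  have t122 : ι ℝ (b 1) * ι ℝ (b 2) * ι ℝ (b 2) = 0 := by
    have h := triple b 1 2 2; norm_num [lc3] at h; exact h
  have h0 := h 0
  have h1 := h 1
  have h2 := h 2
  rw [add_mul, add_mul, smul_mul_assoc, smul_mul_assoc, smul_mul_assoc] at h0 h1 h2
  rw [t010, t020, t120, smul_zero, smul_zero, zero_add, zero_add] at h0
  rw [t011, t021, t121, smul_zero, smul_zero, smul_neg, add_zero, zero_add,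
    neg_eq_zero] at h1
  rw [t022, t122, smul_zero, smul_zero, add_zero, add_zero] at h2
  have e0 : B 2 = 0 := w_smul_cancel b h0
  have e1 : B 1 = 0 := w_smul_cancel b h1
  have e2 : B 0 = 0 := w_smul_cancel b h2
  rw [e0, e1, e2]
  simp

end Stmt6Aux

/-- given 2-forms `β¹,β²,β³ ∈ Λ²V` (with `c i j = ((β^i∧e^j)/w)`), there
exists `α ∈ V` with `α∧e^i = β^i` for `i = 1,2,3` if and only if
`β^i∧e^j + β^j∧e^i = 0` for all `i,j`; and in that case the solution is unique, given by
`α = (1/2)·Σ_{i,j,k} ε_{ijk}·((β^i∧e^j)/w)·e^k`. -/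
theorem stmt_6 (V : Type*) [AddCommGroup V] [Module ℝ V] (b : Module.Basis (Fin 3) ℝ V)
    (β : Fin 3 → ExteriorAlgebra ℝ V)
    (hβ : ∀ i : Fin 3, β i ∈
      (LinearMap.range (ExteriorAlgebra.ι ℝ : V →ₗ[ℝ] ExteriorAlgebra ℝ V) ^ 2 :
        Submodule ℝ (ExteriorAlgebra ℝ V)))
    (c : Fin 3 → Fin 3 → ℝ)
    (hc : ∀ i j : Fin 3, β i * ExteriorAlgebra.ι ℝ (b j) =
      c i j • (ExteriorAlgebra.ι ℝ (b 0) * ExteriorAlgebra.ι ℝ (b 1) * ExteriorAlgebra.ι ℝ (b 2))) :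
    ((∃ α : V, ∀ i : Fin 3, ExteriorAlgebra.ι ℝ α * ExteriorAlgebra.ι ℝ (b i) = β i) ↔
      (∀ i j : Fin 3, β i * ExteriorAlgebra.ι ℝ (b j) + β j * ExteriorAlgebra.ι ℝ (b i) = 0)) ∧
    (∀ α : V, (∀ i : Fin 3, ExteriorAlgebra.ι ℝ α * ExteriorAlgebra.ι ℝ (b i) = β i) →
      α = ((1 : ℝ) / 2) • ∑ i : Fin 3, ∑ j : Fin 3, ∑ k : Fin 3, (lc3 i j k * c i j) • b k) := by
  classical
  have fwd : (∃ α : V, ∀ i : Fin 3, ι ℝ α * ι ℝ (b i) = β i) →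
      ∀ i j : Fin 3, β i * ι ℝ (b j) + β j * ι ℝ (b i) = 0 := by
    rintro ⟨α, hα⟩ i j
    rw [← hα i, ← hα j, mul_assoc, mul_assoc, ← mul_add, ι_add_mul_swap, mul_zero]
  have antisym : (∀ i j : Fin 3, β i * ι ℝ (b j) + β j * ι ℝ (b i) = 0) →
      ∀ i j : Fin 3, c j i = - c i j := by
    intro hA i j
    have h := hA i j
    rw [hc i j, hc j i, ← add_smul] at h
    have h0 : c i j + c j i = 0 := Stmt6Aux.w_smul_cancel b h
    linarith
  have hmk : (⟨2, by omega⟩ : Fin 3) = 2 := rfl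
  constructor
  · constructor
    · exact fwd
    · intro hA
      have hcs := antisym hA
      have hdiag : ∀ i, c i i = 0 := fun i => by have := hcs i i; linarith
      refine ⟨c 1 2 • b 0 + c 2 0 • b 1 + c 0 1 • b 2, ?_⟩
      intro i
      set α' : V := c 1 2 • b 0 + c 2 0 • b 1 + c 0 1 • b 2 with hα'
      have hprod : ∀ j : Fin 3, ι ℝ α' * ι ℝ (b i) * ι ℝ (b j) =
          (c 1 2 * lc3 0 i j + c 2 0 * lc3 1 i j + c 0 1 * lc3 2 i j) •
            (ι ℝ (b 0) * ι ℝ (b 1) * ι ℝ (b 2)) := by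
        intro j
        rw [hα']
        simp only [map_add, map_smul, add_mul, smul_mul_assoc,
          Stmt6Aux.triple b 0 i j, Stmt6Aux.triple b 1 i j, Stmt6Aux.triple b 2 i j, smul_smul]
        rw [← add_smul, ← add_smul]
      have hco : ∀ j : Fin 3, c 1 2 * lc3 0 i j + c 2 0 * lc3 1 i j + c 0 1 * lc3 2 i j
          = c i j := by
        intro j
        have h01 := hcs 0 1; have h02 := hcs 0 2; have h12 := hcs 1 2
        have d0 := hdiag 0; have d1 := hdiag 1; have d2 := hdiag 2
        fin_cases i <;> fin_cases j
        all_goals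
          norm_num [lc3, hmk]
          try linarith
      have hker : ι ℝ α' * ι ℝ (b i) - β i = 0 := by
        refine Stmt6Aux.key b ?_ ?_
        · refine Submodule.sub_mem _ ?_ (hβ i)
          rw [pow_two]
          exact Submodule.mul_mem_mul (LinearMap.mem_range_self _ _)
            (LinearMap.mem_range_self _ _)
        · intro j
          rw [sub_mul, hprod j, hco j, hc i j, sub_self]
      exact sub_eq_zero.mp hker
  · intro α hα
    have hA := fwd ⟨α, hα⟩
    have hcs := antisym hA
    have hcoef : ∀ i j : Fin 3, ι ℝ α * ι ℝ (b i) * ι ℝ (b j) =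
        c i j • (ι ℝ (b 0) * ι ℝ (b 1) * ι ℝ (b 2)) := by
      intro i j
      rw [hα i, hc i j]
    have hLHS : ∀ i j : Fin 3, ι ℝ α * ι ℝ (b i) * ι ℝ (b j) =
        (b.repr α 0 * lc3 0 i j + b.repr α 1 * lc3 1 i j + b.repr α 2 * lc3 2 i j) •
          (ι ℝ (b 0) * ι ℝ (b 1) * ι ℝ (b 2)) := by
      intro i j
      conv_lhs => rw [← b.sum_repr α]
      rw [map_sum, Fin.sum_univ_three]
      simp only [map_smul, add_mul, smul_mul_assoc,
        Stmt6Aux.triple b 0 i j, Stmt6Aux.triple b 1 i j, Stmt6Aux.triple b 2 i j, smul_smul]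
      rw [← add_smul, ← add_smul]
    have hval : ∀ i j : Fin 3,
        b.repr α 0 * lc3 0 i j + b.repr α 1 * lc3 1 i j + b.repr α 2 * lc3 2 i j = c i j := by
      intro i j
      have h := (hLHS i j).symm.trans (hcoef i j)
      have h' : (b.repr α 0 * lc3 0 i j + b.repr α 1 * lc3 1 i j + b.repr α 2 * lc3 2 i j
          - c i j) • (ι ℝ (b 0) * ι ℝ (b 1) * ι ℝ (b 2)) = 0 := by
        rw [sub_smul, h, sub_self]
      have := Stmt6Aux.w_smul_cancel b h'
      linarith
    have h0' : b.repr α 0 = c 1 2 := by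
      have h := hval 1 2; norm_num [lc3] at h; linarith
    have h1' : b.repr α 1 = c 2 0 := by
      have h := hval 2 0; norm_num [lc3] at h; linarith
    have h2' : b.repr α 2 = c 0 1 := by
      have h := hval 0 1; norm_num [lc3] at h; linarith
    have h21 : c 2 1 = -(c 1 2) := hcs 1 2
    have h10 : c 1 0 = -(c 0 1) := hcs 0 1
    have h02 : c 0 2 = -(c 2 0) := hcs 2 0
    conv_lhs => rw [← b.sum_repr α]
    rw [Fin.sum_univ_three, h0', h1', h2']
    simp only [Fin.sum_univ_three]
    norm_num [lc3, hmk, h21, h10, h02]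
    module

end
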